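/- For the cycle C_n on n ≥ 3 vertices, γ_dR^m(C_n) = n + 1. -/

import Mathlib

open Finset

/-- A set `S` dominates `G`: every vertex outside `S` has a neighbor in `S`. -/
def IsDomSet {V : Type*} (G : SimpleGraph V) (S : Set V) : Prop :=
  ∀ v ∉ S, ∃ u ∈ S, G.Adj v u

/-- A maximal dominating set: dominating, and its complement is not dominating. -/
def IsMaxDomSet {V : Type*} (G : SimpleGraph V) (S : Set V) : Prop :=
  IsDomSet G S ∧ ¬ IsDomSet G Sᶜ

/-- Double Roman dominating function. -/
def IsDRDF {V : Type*} (G : SimpleGraph V) (f : V → ℕ) : Prop :=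
  (∀ v, f v ≤ 3) ∧
  (∀ v, f v = 0 → (∃ u, G.Adj v u ∧ f u = 3) ∨
      ∃ u w, u ≠ w ∧ G.Adj v u ∧ G.Adj v w ∧ f u = 2 ∧ f w = 2) ∧
  (∀ v, f v = 1 → ∃ u, G.Adj v u ∧ (f u = 2 ∨ f u = 3))

/-- Maximal double Roman dominating function: a DRDF whose 0-set is not dominating. -/
def IsMDRDF {V : Type*} (G : SimpleGraph V) (f : V → ℕ) : Prop :=
  IsDRDF G f ∧ ¬ IsDomSet G {v | f v = 0}

/-- Roman dominating function. -/
def IsRDF {V : Type*} (G : SimpleGraph V) (f : V → ℕ) : Prop :=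
  (∀ v, f v ≤ 2) ∧ ∀ v, f v = 0 → ∃ u, G.Adj v u ∧ f u = 2

/-- Maximal Roman dominating function. -/
def IsMRDF {V : Type*} (G : SimpleGraph V) (f : V → ℕ) : Prop :=
  IsRDF G f ∧ ¬ IsDomSet G {v | f v = 0}

/-- Double Roman domination number. -/
noncomputable def drdNum {V : Type*} [Fintype V] (G : SimpleGraph V) : ℕ :=
  sInf {w | ∃ f, IsDRDF G f ∧ ∑ v, f v = w}

/-- Maximal double Roman domination number. -/
noncomputable def mdrdNum {V : Type*} [Fintype V] (G : SimpleGraph V) : ℕ :=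
  sInf {w | ∃ f, IsMDRDF G f ∧ ∑ v, f v = w}

/-- Maximal Roman domination number. -/
noncomputable def mRomanNum {V : Type*} [Fintype V] (G : SimpleGraph V) : ℕ :=
  sInf {w | ∃ f, IsMRDF G f ∧ ∑ v, f v = w}

/-- Maximal domination number. -/
noncomputable def maxDomNum {V : Type*} [Fintype V] (G : SimpleGraph V) : ℕ :=
  sInf {k | ∃ S : Set V, IsMaxDomSet G S ∧ S.ncard = k}


lemma cyc_adj {m : ℕ} {v u : Fin (m+3)} :
    (SimpleGraph.cycleGraph (m+3)).Adj v u ↔ u = v + 1 ∨ u = v - 1 := by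
  rw [SimpleGraph.cycleGraph_adj]
  constructor
  · rintro (h | h)
    · right; rw [eq_sub_iff_add_eq]; rw [sub_eq_iff_eq_add] at h; rw [h]; abel
    · left; rw [sub_eq_iff_eq_add] at h; rw [h]; abel
  · rintro (rfl | rfl)
    · right; abel
    · left; abel

lemma adj_succ {m : ℕ} (v : Fin (m+3)) : (SimpleGraph.cycleGraph (m+3)).Adj v (v+1) :=
  cyc_adj.mpr (Or.inl rfl)

lemma adj_pred {m : ℕ} (v : Fin (m+3)) : (SimpleGraph.cycleGraph (m+3)).Adj v (v-1) :=
  cyc_adj.mpr (Or.inr rfl)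

lemma succ_ne_pred {m : ℕ} (v : Fin (m+3)) : v + 1 ≠ v - 1 := by
  intro h
  have h2 : (2 : Fin (m+3)) = 0 := by
    have : (v + 1) - (v - 1) = 2 := by abel
    rw [h] at this
    simpa using this.symm
  have := congrArg Fin.val h2
  simp [Fin.val_two] at this
  rw [Nat.mod_eq_of_lt (by omega)] at this; omega

lemma val_succ {m : ℕ} (v : Fin (m+3)) (h : v.val < m+2) : (v+1).val = v.val + 1 := by
  rw [Fin.val_add, Fin.val_one', Nat.mod_eq_of_lt (show 1 < m+3 by omega),
    Nat.mod_eq_of_lt (by omega)]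

lemma val_pred {m : ℕ} (v : Fin (m+3)) (h : 0 < v.val) : (v-1).val = v.val - 1 := by
  rw [Fin.sub_def]
  simp only [Fin.val_one', Fin.val_mk]
  rw [Nat.mod_eq_of_lt (show 1 < m+3 by omega)]
  have e : m + 3 - 1 + v.val = (v.val - 1) + (m+3) := by omega
  rw [e, Nat.add_mod_right]
  exact Nat.mod_eq_of_lt (by omega)

lemma val_pred_zero {m : ℕ} (v : Fin (m+3)) (h : v.val = 0) : (v-1).val = m+2 := by
  rw [Fin.sub_def]
  simp only [Fin.val_one', Fin.val_mk]
  rw [Nat.mod_eq_of_lt (show 1 < m+3 by omega), h]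
  exact Nat.mod_eq_of_lt (by omega)

lemma val_zero3 {m : ℕ} : ((0 : Fin (m+3))).val = 0 := rfl

/-- the construction for odd cycles : 1 1 2 (0 2)^k -/
def Fodd : ℕ → ℕ := fun x => if x ≤ 1 then 1 else if x % 2 = 0 then 2 else 0

/-- the construction for even cycles : 1 2 (0 2)^(k+1) -/
def Fev : ℕ → ℕ := fun x => if x = 0 then 1 else if x % 2 = 1 then 2 else 0

lemma sum_Fodd (k : ℕ) : ∑ i ∈ Finset.range (2*k+3), Fodd i = 2*k+4 := by
  induction k with
  | zero => simp [Finset.sum_range_succ, Fodd]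
  | succ k ih =>
    have e : 2*(k+1)+3 = (2*k+3) + 1 + 1 := by ring
    rw [e, Finset.sum_range_succ, Finset.sum_range_succ, ih]
    have e1 : Fodd (2*k+3) = 0 := by simp only [Fodd]; rw [if_neg (by omega), if_neg (by omega)]
    have e2 : Fodd (2*k+3+1) = 2 := by simp only [Fodd]; rw [if_neg (by omega), if_pos (by omega)]
    rw [e1, e2]; ring

lemma sum_Fev (k : ℕ) : ∑ i ∈ Finset.range (2*k+1+3), Fev i = 2*k+1+4 := by
  induction k with
  | zero => simp [Finset.sum_range_succ, Fev]
  | succ k ih =>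
    have e : 2*(k+1)+1+3 = (2*k+1+3) + 1 + 1 := by ring
    rw [e, Finset.sum_range_succ, Finset.sum_range_succ, ih]
    have e1 : Fev (2*k+1+3) = 0 := by simp only [Fev]; rw [if_neg (by omega), if_neg (by omega)]
    have e2 : Fev (2*k+1+3+1) = 2 := by simp only [Fev]; rw [if_neg (by omega), if_pos (by omega)]
    rw [e1, e2]; ring

lemma upper_odd (k : ℕ) :
    IsMDRDF (SimpleGraph.cycleGraph (2*k+3)) (fun v => Fodd v.val) ∧
    ∑ v : Fin (2*k+3), Fodd v.val = 2*k+4 := by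
  have hlt : ∀ v : Fin (2*k+3), v.val < 2*k+3 := fun v => v.isLt
  refine ⟨⟨⟨?_, ?_, ?_⟩, ?_⟩, ?_⟩
  · intro v; simp only [Fodd]; split_ifs <;> omega
  · intro v hv
    have hv' : 2 ≤ v.val ∧ v.val % 2 = 1 := by
      simp only [Fodd] at hv; split_ifs at hv <;> omega
    have hvlt := hlt v
    have hs : (v+1).val = v.val + 1 := val_succ (m := 2*k) v (by omega)
    have hp : (v-1).val = v.val - 1 := val_pred (m := 2*k) v (by omega)
    refine Or.inr ⟨v+1, v-1, succ_ne_pred v, adj_succ v, adj_pred v, ?_, ?_⟩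
    · show Fodd (v+1).val = 2
      rw [hs]; simp only [Fodd]; rw [if_neg (by omega), if_pos (by omega)]
    · show Fodd (v-1).val = 2
      rw [hp]; simp only [Fodd]; rw [if_neg (by omega), if_pos (by omega)]
  · intro v hv
    have hv' : v.val ≤ 1 := by
      simp only [Fodd] at hv; split_ifs at hv <;> omega
    rcases Nat.lt_or_ge v.val 1 with h | h
    · -- v.val = 0 : use v - 1 which has value 2
      refine ⟨v - 1, adj_pred v, Or.inl ?_⟩
      show Fodd (v-1).val = 2
      rw [val_pred_zero (m := 2*k) v (by omega)]
      simp only [Fodd]; rw [if_neg (by omega), if_pos (by omega)]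
    · -- v.val = 1 : use v + 1 which has value 2
      refine ⟨v + 1, adj_succ v, Or.inl ?_⟩
      show Fodd (v+1).val = 2
      rw [val_succ (m := 2*k) v (by omega)]
      simp only [Fodd]; rw [if_neg (by omega), if_pos (by omega)]
  · intro hd
    have h0 : (0 : Fin (2*k+3)) ∉ {v : Fin (2*k+3) | Fodd v.val = 0} := by
      simp only [Set.mem_setOf_eq, val_zero3]
      simp only [Fodd]; rw [if_pos (by omega)]; omega
    obtain ⟨u, hu, hadj⟩ := hd 0 h0
    simp only [Set.mem_setOf_eq] at hu
    rcases cyc_adj.mp hadj with rfl | rfl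
    · rw [show ((0 : Fin (2*k+3))+1).val = 1 by
        rw [val_succ (m := 2*k) 0 (by rw [val_zero3]; omega), val_zero3]] at hu
      simp only [Fodd] at hu; rw [if_pos (by omega)] at hu; omega
    · rw [val_pred_zero (m := 2*k) 0 (by rw [val_zero3])] at hu
      simp only [Fodd] at hu; rw [if_neg (by omega), if_pos (by omega)] at hu; omega
  · rw [Fin.sum_univ_eq_sum_range Fodd (2*k+3)]
    exact sum_Fodd k

lemma upper_even (k : ℕ) :
    IsMDRDF (SimpleGraph.cycleGraph (2*k+1+3)) (fun v => Fev v.val) ∧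
    ∑ v : Fin (2*k+1+3), Fev v.val = 2*k+1+4 := by
  have hlt : ∀ v : Fin (2*k+1+3), v.val < 2*k+1+3 := fun v => v.isLt
  refine ⟨⟨⟨?_, ?_, ?_⟩, ?_⟩, ?_⟩
  · intro v; simp only [Fev]; split_ifs <;> omega
  · intro v hv
    have hv' : 2 ≤ v.val ∧ v.val % 2 = 0 := by
      simp only [Fev] at hv; split_ifs at hv <;> omega
    have hvlt := hlt v
    have hs : (v+1).val = v.val + 1 := val_succ (m := 2*k+1) v (by omega)
    have hp : (v-1).val = v.val - 1 := val_pred (m := 2*k+1) v (by omega)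
    refine Or.inr ⟨v+1, v-1, succ_ne_pred v, adj_succ v, adj_pred v, ?_, ?_⟩
    · show Fev (v+1).val = 2
      rw [hs]; simp only [Fev]; rw [if_neg (by omega), if_pos (by omega)]
    · show Fev (v-1).val = 2
      rw [hp]; simp only [Fev]; rw [if_neg (by omega), if_pos (by omega)]
  · intro v hv
    have hv' : v.val = 0 := by
      simp only [Fev] at hv; split_ifs at hv <;> omega
    refine ⟨v + 1, adj_succ v, Or.inl ?_⟩
    show Fev (v+1).val = 2
    rw [val_succ (m := 2*k+1) v (by omega)]
    simp only [Fev]; rw [if_neg (by omega), if_pos (by omega)]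
  · intro hd
    have h0 : (0 : Fin (2*k+1+3)) ∉ {v : Fin (2*k+1+3) | Fev v.val = 0} := by
      simp only [Set.mem_setOf_eq, val_zero3]
      simp only [Fev]; simp
    obtain ⟨u, hu, hadj⟩ := hd 0 h0
    simp only [Set.mem_setOf_eq] at hu
    rcases cyc_adj.mp hadj with rfl | rfl
    · rw [show ((0 : Fin (2*k+1+3))+1).val = 1 by
        rw [val_succ (m := 2*k+1) 0 (by rw [val_zero3]; omega), val_zero3]] at hu
      simp only [Fev] at hu; simp at hu
    · rw [val_pred_zero (m := 2*k+1) 0 (by rw [val_zero3])] at hu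
      simp only [Fev] at hu; rw [if_neg (by omega), if_pos (by omega)] at hu; omega
  · rw [Fin.sum_univ_eq_sum_range Fev (2*k+1+3)]
    exact sum_Fev k

lemma upper {n : ℕ} (hn : 3 ≤ n) :
    ∃ f : Fin n → ℕ, IsMDRDF (SimpleGraph.cycleGraph n) f ∧ ∑ v, f v = n + 1 := by
  rcases Nat.even_or_odd n with he | ho
  · obtain ⟨k, rfl⟩ : ∃ k, n = 2*k+1+3 := ⟨(n-4)/2, by obtain ⟨j, hj⟩ := he; omega⟩
    obtain ⟨h1, h2⟩ := upper_even k
    exact ⟨_, h1, by omega⟩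
  · obtain ⟨k, rfl⟩ : ∃ k, n = 2*k+3 := ⟨(n-3)/2, by obtain ⟨j, hj⟩ := ho; omega⟩
    obtain ⟨h1, h2⟩ := upper_odd k
    exact ⟨_, h1, by omega⟩

/-- payment function: how much a vertex of value k can give a zero-neighbor -/
def gpay : ℕ → ℕ := fun k => if k = 3 then 2 else if k = 2 then 1 else 0

lemma lower_bound {m : ℕ} (f : Fin (m+3) → ℕ)
    (hf : IsMDRDF (SimpleGraph.cycleGraph (m+3)) f) :
    m + 4 ≤ ∑ v, f v := by
  obtain ⟨⟨hb, h0, h1⟩, hnd⟩ := hf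
  set G := SimpleGraph.cycleGraph (m+3) with hG
  -- payments
  set q : Fin (m+3) → ℕ := fun v => if f (v+1) = 0 then gpay (f v) else 0 with hq
  set r : Fin (m+3) → ℕ := fun v => if f (v-1) = 0 then gpay (f v) else 0 with hr
  set c : Fin (m+3) → ℤ :=
    fun v => 2 * f v + q (v-1) + r (v+1) - q v - r v with hc
  have hqle : ∀ v, q v ≤ gpay (f v) := by
    intro v; rw [hq]; dsimp only; split <;> omega
  have hrle : ∀ v, r v ≤ gpay (f v) := by
    intro v; rw [hr]; dsimp only; split <;> omega
  have hgle : ∀ v, gpay (f v) ≤ 2 := by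
    intro v; unfold gpay; split_ifs <;> omega
  -- the total of c equals 2 * total of f
  have hsum : ∑ v, c v = 2 * ∑ v, f v := by
    have e1 : ∑ v : Fin (m+3), (q (v-1) : ℤ) = ∑ v : Fin (m+3), (q v : ℤ) :=
      Fintype.sum_equiv (Equiv.subRight (1 : Fin (m+3))) _ _ (fun v => rfl)
    have e2 : ∑ v : Fin (m+3), (r (v+1) : ℤ) = ∑ v : Fin (m+3), (r v : ℤ) :=
      Fintype.sum_equiv (Equiv.addRight (1 : Fin (m+3))) _ _ (fun v => rfl)
    have h₁ : ∑ v : Fin (m+3), (c v + (q v : ℤ) + (r v : ℤ))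
        = ∑ v : Fin (m+3), ((2 * f v : ℤ) + (q (v-1) : ℤ) + (r (v+1) : ℤ)) :=
      Finset.sum_congr rfl (fun x _ => by rw [hc]; ring)
    simp only [Finset.sum_add_distrib] at h₁
    rw [e1, e2] at h₁
    push_cast [Finset.mul_sum]
    linarith
  -- pointwise bound
  have hc2 : ∀ v, (2 : ℤ) ≤ c v := by
    intro v
    have hv3 := hb v
    have hcase : f v = 0 ∨ f v = 1 ∨ f v = 2 ∨ f v = 3 := by omega
    have hqv := hqle v
    have hrv := hrle v
    rcases hcase with h | h | h | h
    · -- f v = 0 : receives at least 2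
      have hqv0 : q v = 0 := by rw [hq]; dsimp only; rw [h]; simp [gpay]
      have hrv0 : r v = 0 := by rw [hr]; dsimp only; rw [h]; simp [gpay]
      have hrecv : 2 ≤ q (v-1) + r (v+1) := by
        rcases h0 v h with ⟨u, hadj, hu3⟩ | ⟨u, w, huw, hadju, hadjw, hu2, hw2⟩
        · rcases cyc_adj.mp hadj with rfl | rfl
          · have : r (v+1) = 2 := by
              rw [hr]; dsimp only; rw [add_sub_cancel_right, h, hu3]; simp [gpay]
            omega
          · have : q (v-1) = 2 := by
              rw [hq]; dsimp only; rw [sub_add_cancel, h, hu3]; simp [gpay]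
            omega
        · have key : ∀ x : Fin (m+3), G.Adj v x → f x = 2 →
              (x = v + 1 ∧ r (v+1) = 1) ∨ (x = v - 1 ∧ q (v-1) = 1) := by
            intro x hadj hx2
            rcases cyc_adj.mp hadj with rfl | rfl
            · left
              refine ⟨rfl, ?_⟩
              rw [hr]; dsimp only; rw [add_sub_cancel_right, h, hx2]; simp [gpay]
            · right
              refine ⟨rfl, ?_⟩
              rw [hq]; dsimp only; rw [sub_add_cancel, h, hx2]; simp [gpay]
          rcases key u hadju hu2 with ⟨hu, hru⟩ | ⟨hu, hqu⟩ <;>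
            rcases key w hadjw hw2 with ⟨hw, hrw⟩ | ⟨hw, hqw⟩
          · exact absurd (hu.trans hw.symm) huw
          · omega
          · omega
          · exact absurd (hu.trans hw.symm) huw
      rw [hc]; dsimp only; rw [h, hqv0, hrv0]
      push_cast
      omega
    · have hg : gpay (f v) = 0 := by rw [h]; rfl
      rw [hc]; dsimp only; rw [h]
      push_cast
      omega
    · have hg : gpay (f v) = 1 := by rw [h]; rfl
      rw [hc]; dsimp only; rw [h]
      push_cast
      omega
    · have hg : gpay (f v) = 2 := by rw [h]; rfl
      rw [hc]; dsimp only; rw [h]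
      push_cast
      omega
  -- special vertex with c ≥ 3
  have hspec : ∃ u₀, (3 : ℤ) ≤ c u₀ := by
    unfold IsDomSet at hnd
    push_neg at hnd
    obtain ⟨v₀, hv₀mem, hv₀⟩ := hnd
    simp only [Set.mem_setOf_eq] at hv₀mem hv₀
    have hsucc : f (v₀ + 1) ≠ 0 := fun h => hv₀ (v₀+1) h (adj_succ v₀)
    have hpred : f (v₀ - 1) ≠ 0 := fun h => hv₀ (v₀-1) h (adj_pred v₀)
    have hqv0 : q v₀ = 0 := by rw [hq]; dsimp only; rw [if_neg hsucc]
    have hrv0 : r v₀ = 0 := by rw [hr]; dsimp only; rw [if_neg hpred]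
    have hv3 := hb v₀
    have hcase : f v₀ = 1 ∨ 2 ≤ f v₀ := by omega
    rcases hcase with h | h
    · -- f v₀ = 1, its 2/3-neighbor has c ≥ 3
      obtain ⟨u, hadj, hu⟩ := h1 v₀ h
      rcases cyc_adj.mp hadj with rfl | rfl
      · refine ⟨v₀ + 1, ?_⟩
        have hru : r (v₀ + 1) = 0 := by
          rw [hr]; dsimp only; rw [add_sub_cancel_right, if_neg (by omega)]
        have hqu := hqle (v₀ + 1)
        rw [hc]; dsimp only; rw [hru]
        have : gpay (f (v₀+1)) ≤ f (v₀+1) - 1 := by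
          unfold gpay; rcases hu with h2 | h2 <;> rw [h2] <;> simp
        push_cast
        omega
      · refine ⟨v₀ - 1, ?_⟩
        have hqu : q (v₀ - 1) = 0 := by
          rw [hq]; dsimp only; rw [sub_add_cancel, if_neg (by omega)]
        have hru := hrle (v₀ - 1)
        rw [hc]; dsimp only; rw [hqu]
        have : gpay (f (v₀-1)) ≤ f (v₀-1) - 1 := by
          unfold gpay; rcases hu with h2 | h2 <;> rw [h2] <;> simp
        push_cast
        omega
    · refine ⟨v₀, ?_⟩
      rw [hc]; dsimp only; rw [hqv0, hrv0]
      push_cast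
      omega
  obtain ⟨u₀, hu₀⟩ := hspec
  -- sum up
  have htot : (2 * (m+3) + 1 : ℤ) ≤ ∑ v, c v := by
    rw [← Finset.add_sum_erase _ c (Finset.mem_univ u₀)]
    have hcard : (Finset.univ.erase u₀).card = m + 2 := by
      rw [Finset.card_erase_of_mem (Finset.mem_univ u₀)]
      simp
    have hrest := Finset.card_nsmul_le_sum (Finset.univ.erase u₀) c 2
      (fun x _ => hc2 x)
    rw [hcard, nsmul_eq_mul] at hrest
    push_cast at hrest ⊢
    linarith
  rw [hsum] at htot
  omega

lemma lower_bound' {n : ℕ} (hn : 3 ≤ n) (f : Fin n → ℕ)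
    (hf : IsMDRDF (SimpleGraph.cycleGraph n) f) : n + 1 ≤ ∑ v, f v := by
  obtain ⟨m, rfl⟩ : ∃ m, n = m + 3 := ⟨n - 3, by omega⟩
  have := lower_bound f hf
  omega

theorem stmt15 (n : ℕ) (hn : 3 ≤ n) :
    mdrdNum (SimpleGraph.cycleGraph n) = n + 1 := by
  have hub : (n+1) ∈ {w | ∃ f, IsMDRDF (SimpleGraph.cycleGraph n) f ∧ ∑ v, f v = w} := by
    obtain ⟨f, hf, hsum⟩ := upper hn
    exact ⟨f, hf, hsum⟩
  have h1 : mdrdNum (SimpleGraph.cycleGraph n) ≤ n + 1 := Nat.sInf_le hub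
  have h2 : mdrdNum (SimpleGraph.cycleGraph n) ∈
      {w | ∃ f, IsMDRDF (SimpleGraph.cycleGraph n) f ∧ ∑ v, f v = w} :=
    Nat.sInf_mem ⟨n+1, hub⟩
  obtain ⟨g, hg, hgw⟩ := h2
  have h3 := lower_bound' hn g hg
  omega
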